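/- arXiv:1108.4766 — 2 statements merged into one kernel-verified Lean document; each statement's English description precedes it below -/
import Mathlib

section
/- Let k ≥ 3 be an odd integer and d ≥ 1 an integer. For every nonzero real number z, f^{k,k}_{2d−1}(z) · z^((k−3)/2 − k) / (2d−1)^((k−3)/2) = (2·(k(2d−1))‼ / ((2d−1)‼)^k) · z^(−1). Equivalently, the residue at z = 0 of z^(−k)·f^{k,k}_{2d−1}(z)·z^((k−3)/2)/(2d−1)^((k−3)/2) equals the d-th coefficient 2·(k(2d−1))‼/((2d−1)‼)^k of the series τ_k. -/
open Nat

lemma df_succ (n : ℕ) : (2*(n+1) - 1)‼ = (2*n + 1) * (2*n - 1)‼ := by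
  cases n with
  | zero => simp [Nat.doubleFactorial]
  | succ n =>
    have h3 : 2*(n+1+1) - 1 = (2*(n+1) - 1) + 2 := by omega
    have h4 : (2*(n+1) - 1) + 2 = 2*(n+1) + 1 := by omega
    rw [h3, Nat.doubleFactorial_add_two, h4]

lemma prodOdd (n : ℕ) :
    (∏ j ∈ Finset.range n, (2*(n:ℝ) - 1 - 2*(j:ℝ))) = ((2*n - 1)‼ : ℕ) := by
  induction n with
  | zero => simp
  | succ n ih =>
    rw [Finset.prod_range_succ']
    have h1 : ∀ j ∈ Finset.range n,
        (2*((n:ℝ)+1) - 1 - 2*((j:ℝ)+1)) = (2*(n:ℝ) - 1 - 2*(j:ℝ)) := by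
      intro j _; ring
    push_cast
    rw [Finset.prod_congr rfl h1, ih, df_succ]
    push_cast
    ring

lemma prod_form (n : ℕ) (w : ℝ) :
    (∏ j ∈ Finset.range n, ((2*(n:ℝ) - 1 - 2*(j:ℝ)) * w)) = ((2*n - 1)‼ : ℕ) * w^n := by
  rw [Finset.prod_mul_distrib, prodOdd, Finset.prod_const, Finset.card_range]

theorem stmt_5 (k d : ℕ) (hk : 3 ≤ k) (hkodd : Odd k) (hd : 1 ≤ d)
    (z : ℝ) (hz : z ≠ 0) :
    ((2 / (2 * (d : ℝ) - 1)) *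
      (∏ j ∈ Finset.range (k * d - (k + 1) / 2 + 1),
        ((k : ℝ) * (2 * (d : ℝ) - 1) - 2 * (j : ℝ)) * z / (2 * (d : ℝ) - 1)) /
      (∏ j ∈ Finset.Icc 1 (d - 1),
        ((2 * (d : ℝ) - 1 - 2 * (j : ℝ)) * z / (2 * (d : ℝ) - 1)) ^ k)) *
      z ^ (((k : ℤ) - 3) / 2 - (k : ℤ)) / (2 * (d : ℝ) - 1) ^ ((k - 3) / 2)
    = (2 * ((k * (2 * d - 1))‼ : ℝ) / (((2 * d - 1)‼ : ℝ)) ^ k) * z ^ (-1 : ℤ) := by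
  obtain ⟨t, ht⟩ : ∃ t, k = 2*t + 3 := ⟨(k-3)/2, by obtain ⟨s, hs⟩ := hkodd; omega⟩
  obtain ⟨m, hm⟩ : ∃ m, d = m + 1 := ⟨d - 1, by omega⟩
  subst ht hm
  have hp : ∃ p, p = t*m := ⟨t*m, rfl⟩
  obtain ⟨p, hp⟩ := hp
  set n : ℕ := 2*p + 3*m + t + 2 with hn
  set D : ℝ := 2 * ((m:ℝ)+1) - 1 with hD
  have hDval : D = 2*(m:ℝ) + 1 := by rw [hD]; ring
  have hDpos : (0:ℝ) < D := by rw [hDval]; positivity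
  have hDne : D ≠ 0 := ne_of_gt hDpos
  have e1 : (2*t+3)*(m+1) = 2*p + 3*m + 2*t + 3 := by rw [hp]; ring
  have e2 : (2*t+3)*(2*m+1) = 4*p + 2*t + 6*m + 3 := by rw [hp]; ring
  have e3 : m*(2*t+3) = 2*p + 3*m := by rw [hp]; ring
  have hbound : (2*t+3)*(m+1) - ((2*t+3) + 1)/2 + 1 = n := by omega
  -- numerator product
  have hnum : (∏ j ∈ Finset.range ((2*t+3)*(m+1) - ((2*t+3)+1)/2 + 1),
      (((2*t+3 : ℕ) : ℝ) * (2 * (((m:ℕ)+1 : ℕ):ℝ) - 1) - 2 * (j:ℝ)) * z / (2 * (((m:ℕ)+1 : ℕ):ℝ) - 1))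
      = ((2*n - 1)‼ : ℕ) * (z^n / D^n) := by
    rw [hbound, ← div_pow, ← prod_form n (z / D)]
    apply Finset.prod_congr rfl
    intro j hj
    have hcast : ((2*t+3 : ℕ) : ℝ) * (2 * (((m:ℕ)+1 : ℕ):ℝ) - 1) = 2*(n:ℝ) - 1 := by
      push_cast [hn, hp]; ring
    push_cast
    push_cast at hcast
    rw [hcast, hD]
    ring
  -- denominator product
  have hden : (∏ j ∈ Finset.Icc 1 (m + 1 - 1),
      ((2 * (((m:ℕ)+1 : ℕ):ℝ) - 1 - 2 * (j:ℝ)) * z / (2 * (((m:ℕ)+1 : ℕ):ℝ) - 1)) ^ (2*t+3))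
      = (((2*m - 1)‼ : ℕ)) ^ (2*t+3) * (z^(m*(2*t+3)) / D^(m*(2*t+3))) := by
    rw [Finset.prod_pow, ← div_pow, pow_mul, ← mul_pow]
    congr 1
    rw [show m + 1 - 1 = m from rfl, ← Finset.Ico_add_one_right_eq_Icc, Finset.prod_Ico_eq_prod_range,
      show m + 1 - 1 = m from rfl, ← prod_form m (z / D)]
    apply Finset.prod_congr rfl
    intro j hj
    rw [hD]
    push_cast
    ring
  rw [show ((m:ℕ)+1 : ℕ) = m+1 from rfl] at *
  rw [hnum, hden]
  -- exponents
  have hz1 : z ^ ((((2*t+3 : ℕ) : ℤ) - 3) / 2 - ((2*t+3 : ℕ) : ℤ)) = (z ^ (t+3))⁻¹ := by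
    rw [show (((2*t+3 : ℕ) : ℤ) - 3) / 2 - ((2*t+3 : ℕ) : ℤ) = -((t+3 : ℕ) : ℤ) from by push_cast; omega]
    rw [zpow_neg, zpow_natCast]
  rw [hz1, show (-1 : ℤ) = -((1:ℕ):ℤ) from by norm_num, zpow_neg, zpow_natCast]
  rw [show (2*t+3 : ℕ) - 3 = 2*t from by omega, show (2*t)/2 = t from by omega]
  -- double factorial identities
  have hdf1 : ((2*t+3)*(2*(m+1) - 1))‼ = (2*n - 1)‼ := by
    have h5 : 2*(m+1) - 1 = 2*m+1 := by omega
    rw [h5]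
    congr 1
    omega
  have hdf2 : (2*(m+1) - 1)‼ = (2*m + 1) * (2*m - 1)‼ := df_succ m
  rw [hdf1, hdf2]
  set N : ℝ := (((2*n - 1)‼ : ℕ) : ℝ) with hN
  set B : ℝ := (((2*m - 1)‼ : ℕ) : ℝ) with hB
  have hBpos : (0:ℝ) < B := by rw [hB]; exact_mod_cast Nat.doubleFactorial_pos _
  have hBne : B ≠ 0 := ne_of_gt hBpos
  have hnsplit : n = m*(2*t+3) + (t+2) := by omega
  rw [Nat.cast_mul, show ((2*m+1 : ℕ) : ℝ) = D from by rw [hDval]; push_cast; ring,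
    mul_pow, hnsplit, pow_add, pow_add]
  rw [show (2 * ((m+1:ℕ):ℝ) - 1) = D from by rw [hD]; push_cast; ring]
  field_simp
  ring
end

section
/- Let k ≥ 3 be an odd integer. Let T ∈ ℚ⟦q⟧ be the formal power series whose coefficient of q^(2d−1) is 2·(k(2d−1))‼/((2d−1)‼)^k for every integer d ≥ 1 and whose other coefficients are 0. Let θ : ℚ⟦q⟧ → ℚ⟦q⟧ be the operator θ(F) := q·(dF/dq). Then (1/2)^(k−1)·θ^(k−1)(T) − k·q²·((k/2)·θ + (k−1))∘((k/2)·θ + (k−2))∘···∘((k/2)·θ + 1)(T) = (k‼/2^(k−2))·q, where for a scalar c the operator (k/2)·θ + c sends F to (k/2)·θ(F) + c·F, and n‼ denotes the double factorial. -/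
open Nat PowerSeries Finset

/-- The operator `θ = q·d/dq` on formal power series. -/
noncomputable def theta (F : PowerSeries ℚ) : PowerSeries ℚ :=
  PowerSeries.X * PowerSeries.derivative ℚ F

lemma coeff_theta (F : PowerSeries ℚ) (n : ℕ) :
    PowerSeries.coeff n (theta F) = n * PowerSeries.coeff n F := by
  cases n with
  | zero => simp [theta]
  | succ m =>
    rw [theta, PowerSeries.coeff_succ_X_mul, PowerSeries.coeff_derivative]
    push_cast; ring

lemma coeff_theta_iter (F : PowerSeries ℚ) (m n : ℕ) :
    PowerSeries.coeff n (theta^[m] F) = (n : ℚ) ^ m * PowerSeries.coeff n F := by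
  induction m with
  | zero => simp
  | succ j ih => rw [Function.iterate_succ_apply', coeff_theta, ih]; ring

lemma dfac_add (m : ℕ) : ∀ j : ℕ, (m + 2 * j)‼ = (∏ i ∈ Finset.range j, (m + 2 * (i + 1))) * m‼ := by
  intro j
  induction j with
  | zero => simp
  | succ i ih =>
    have : m + 2 * (i + 1) = (m + 2 * i) + 2 := by ring
    rw [Finset.prod_range_succ, this, Nat.doubleFactorial_add_two, ih]
    ring


/-- The iterated application `((k/2)·θ + n) ∘ ⋯ ∘ ((k/2)·θ + 1)` applied to `T`. -/
noncomputable def opChain (k : ℕ) (T : PowerSeries ℚ) : ℕ → PowerSeries ℚ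
  | 0 => T
  | n + 1 => ((k : ℚ) / 2) • theta (opChain k T n) + ((n : ℚ) + 1) • opChain k T n


lemma coeff_opChain (k : ℕ) (T : PowerSeries ℚ) (m n : ℕ) :
    PowerSeries.coeff n (opChain k T m)
      = (∏ j ∈ Finset.range m, ((k : ℚ) * n / 2 + (j + 1))) * PowerSeries.coeff n T := by
  induction m with
  | zero => simp [opChain]
  | succ j ih =>
    rw [opChain, map_add, map_smul, map_smul, coeff_theta, ih, Finset.prod_range_succ]
    simp only [smul_eq_mul]
    push_cast
    ring

theorem stmt_7 (k : ℕ) (hk : 3 ≤ k) (hkodd : Odd k) (T : PowerSeries ℚ)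
    (hT1 : ∀ d : ℕ, 1 ≤ d →
      PowerSeries.coeff (2 * d - 1) T
        = 2 * ((k * (2 * d - 1))‼ : ℚ) / (((2 * d - 1)‼ : ℚ)) ^ k)
    (hT2 : ∀ n : ℕ, Even n → PowerSeries.coeff n T = 0) :
    ((1 : ℚ) / 2) ^ (k - 1) • (theta^[k - 1] T)
      - (k : ℚ) • (PowerSeries.X ^ 2 * opChain k T (k - 1))
    = ((k‼ : ℚ) / 2 ^ (k - 2)) • PowerSeries.X := by
  ext n
  rw [map_sub, map_smul, map_smul, map_smul, coeff_theta_iter,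
    PowerSeries.coeff_X_pow_mul', PowerSeries.coeff_X]
  simp only [smul_eq_mul]
  match n with
  | 0 => simp [hT2 0 Even.zero]
  | 1 =>
    have h1 : PowerSeries.coeff 1 T = 2 * ((k * 1)‼ : ℚ) / ((1‼ : ℚ)) ^ k := by
      have := hT1 1 le_rfl; norm_num at this ⊢; exact this
    rw [if_neg (by norm_num), if_pos rfl]
    simp only [Nat.doubleFactorial, Nat.cast_one, one_pow, mul_one] at h1
    rw [h1]
    have hke : k - 1 = (k - 2) + 1 := by omega
    rw [hke, pow_succ]
    push_cast
    field_simp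
    ring
    rw [mul_assoc, ← mul_pow]; norm_num
  | (m + 2) =>
    rw [if_pos (by omega), if_neg (by omega)]
    have hm2 : m + 2 - 2 = m := by omega
    rw [hm2, coeff_opChain]
    rcases Nat.even_or_odd m with he | ho
    · rw [hT2 m he, hT2 (m + 2) (he.add even_two)]
      ring
    · obtain ⟨c, rfl⟩ := ho
      have h1 : PowerSeries.coeff (2 * (c + 1) - 1) T
          = 2 * ((k * (2 * (c + 1) - 1))‼ : ℚ) / (((2 * (c + 1) - 1)‼ : ℚ)) ^ k :=
        hT1 (c + 1) (by omega)
      have h2 : PowerSeries.coeff (2 * (c + 2) - 1) T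
          = 2 * ((k * (2 * (c + 2) - 1))‼ : ℚ) / (((2 * (c + 2) - 1)‼ : ℚ)) ^ k :=
        hT1 (c + 2) (by omega)
      have e1 : 2 * (c + 1) - 1 = 2 * c + 1 := by omega
      have e2 : 2 * (c + 2) - 1 = 2 * c + 1 + 2 := by omega
      rw [e1] at h1
      rw [e2] at h2
      rw [h1, h2]
      -- double factorial recurrences
      have hB : (2 * c + 1 + 2)‼ = (2 * c + 1 + 2) * (2 * c + 1)‼ := Nat.doubleFactorial_add_two _
      have hA : (k * (2 * c + 1 + 2))‼
          = (∏ i ∈ Finset.range k, (k * (2 * c + 1) + 2 * (i + 1))) * (k * (2 * c + 1))‼ := by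
        have : k * (2 * c + 1 + 2) = k * (2 * c + 1) + 2 * k := by ring
        rw [this, dfac_add]
      rw [hA, hB]
      -- split off last factor of the product over range k
      obtain ⟨e, rfl⟩ : ∃ e, k = e + 1 := ⟨k - 1, by omega⟩
      rw [Finset.prod_range_succ]
      simp only [Nat.add_sub_cancel]
      -- rewrite rational product
      have hprod : (∏ j ∈ Finset.range e, (((e + 1 : ℕ) : ℚ) * ((2 * c + 1 : ℕ) : ℚ) / 2 + (j + 1)))
          = (1 / 2 : ℚ) ^ e * ∏ j ∈ Finset.range e, (((e + 1) * (2 * c + 1) + 2 * (j + 1) : ℕ) : ℚ) := by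
        rw [show ((1:ℚ)/2) ^ e = ∏ _j ∈ Finset.range e, ((1:ℚ)/2) by simp,
          ← Finset.prod_mul_distrib]
        refine Finset.prod_congr rfl fun j _ => ?_
        push_cast
        ring
      have hD : (((2 * c + 1)‼ : ℕ) : ℚ) ≠ 0 := by
        exact_mod_cast (Nat.doubleFactorial_pos _).ne'
      have hn : ((2 * c + 1 + 2 : ℕ) : ℚ) ≠ 0 := by positivity
      push_cast at hprod ⊢
      rw [hprod]
      simp only [mul_pow, pow_succ]
      field_simp
      ring
end
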